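/- Let (π,V) be an analytic family of admissible (𝔤,K)-modules over a connected analytic manifold Z with (π_{z₀},V) finitely generated for some z₀. If ω ⊂ Z is compact, then there is a compact subset C_ω ⊂ 𝔥* such that every Z(𝔤)-infinitesimal character occurring in (π_z,V) for z ∈ ω has Harish-Chandra parameter in C_ω. -/

import Mathlib

open Polynomial Filter Matrix

section Helpers

variable {E : Type*} [NormedAddCommGroup E] [NormedSpace ℝ E] {U : Set E}

lemma stmt17_sum {ι : Type*} (s : Finset ι) (f : ι → E → ℂ)
    (h : ∀ i ∈ s, AnalyticOnNhd ℝ (f i) U) :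
    AnalyticOnNhd ℝ (fun z => ∑ i ∈ s, f i z) U := by
  classical
  induction s using Finset.induction_on with
  | empty => simpa using (analyticOnNhd_const (v := (0:ℂ)))
  | @insert a s ha ih =>
      simp only [Finset.sum_insert ha]
      exact (h a (Finset.mem_insert_self a s)).add
        (ih fun i hi => h i (Finset.mem_insert_of_mem hi))

lemma stmt17_prod {ι : Type*} (s : Finset ι) (f : ι → E → ℂ)
    (h : ∀ i ∈ s, AnalyticOnNhd ℝ (f i) U) :
    AnalyticOnNhd ℝ (fun z => ∏ i ∈ s, f i z) U := by
  classical
  induction s using Finset.induction_on with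
  | empty => simpa using (analyticOnNhd_const (v := (1:ℂ)))
  | @insert a s ha ih =>
      simp only [Finset.prod_insert ha]
      exact (h a (Finset.mem_insert_self a s)).mul
        (ih fun i hi => h i (Finset.mem_insert_of_mem hi))

lemma stmt17_det {d : ℕ} (M : E → Matrix (Fin d) (Fin d) ℂ)
    (h : ∀ i k, AnalyticOnNhd ℝ (fun z => M z i k) U) :
    AnalyticOnNhd ℝ (fun z => (M z).det) U := by
  have : (fun z => (M z).det)
      = fun z => ∑ σ : Equiv.Perm (Fin d),
          ((Equiv.Perm.sign σ : ℤ) : ℂ) * ∏ i, M z (σ i) i := by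
    funext z; exact Matrix.det_apply' (M z)
  rw [this]
  exact stmt17_sum _ _ fun σ _ =>
    analyticOnNhd_const.mul (stmt17_prod _ _ fun i _ => h (σ i) i)

lemma stmt17_eval_charpoly {d : ℕ} (N : Matrix (Fin d) (Fin d) ℂ) (t : ℂ) :
    N.charpoly.eval t = (t • (1 : Matrix (Fin d) (Fin d) ℂ) - N).det := by
  rw [Matrix.charpoly, ← Polynomial.coe_evalRingHom, RingHom.map_det]
  congr 1
  ext i j
  by_cases hij : i = j
  · subst hij
    simp [Matrix.charmatrix_apply_eq, Matrix.one_apply]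
  · simp [Matrix.charmatrix_apply_ne _ _ _ hij, Matrix.one_apply, hij]

lemma stmt17_charpoly_coeff {d k : ℕ} (M : E → Matrix (Fin d) (Fin d) ℂ)
    (h : ∀ i k', AnalyticOnNhd ℝ (fun z => M z i k') U) :
    AnalyticOnNhd ℝ (fun z => (M z).charpoly.coeff k) U := by
  classical
  set s : Finset ℂ := (Finset.range (d+1)).image (fun n : ℕ => (n : ℂ)) with hs
  have hinj : Set.InjOn id (s : Set ℂ) := fun a _ b _ hab => hab
  have hcard : s.card = d + 1 := by
    rw [hs, Finset.card_image_of_injective _ Nat.cast_injective, Finset.card_range]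
  have hrep : ∀ z, (M z).charpoly.coeff k
      = ∑ t ∈ s, (t • (1 : Matrix (Fin d) (Fin d) ℂ) - M z).det
          * (Lagrange.basis s id t).coeff k := by
    intro z
    have hdeg : (M z).charpoly.degree < (s.card : ℕ) := by
      rw [Matrix.charpoly_degree_eq_dim, Fintype.card_fin, hcard]
      exact_mod_cast Nat.lt_succ_self d
    conv_lhs => rw [Lagrange.eq_interpolate hinj hdeg]
    rw [Lagrange.interpolate_apply, Polynomial.finset_sum_coeff]
    refine Finset.sum_congr rfl fun t _ => ?_
    rw [Polynomial.coeff_C_mul, stmt17_eval_charpoly]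
    rfl
  have : (fun z => (M z).charpoly.coeff k)
      = fun z => ∑ t ∈ s, (t • (1 : Matrix (Fin d) (Fin d) ℂ) - M z).det
          * (Lagrange.basis s id t).coeff k := funext hrep
  rw [this]
  refine stmt17_sum _ _ fun t _ => AnalyticOnNhd.mul ?_ analyticOnNhd_const
  refine stmt17_det _ fun i k' => ?_
  have : (fun z => (t • (1 : Matrix (Fin d) (Fin d) ℂ) - M z) i k')
      = fun z => t * (1 : Matrix (Fin d) (Fin d) ℂ) i k' - M z i k' := by
    funext z; simp [Matrix.sub_apply, Matrix.smul_apply, smul_eq_mul]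
  rw [this]
  exact analyticOnNhd_const.sub (h i k')

lemma stmt17_root_bound (p : ℂ[X]) (hm : p.Monic) {c : ℂ} (hc : p.eval c = 0) :
    ‖c‖ ≤ 1 + ∑ k ∈ Finset.range p.natDegree, ‖p.coeff k‖ := by
  by_contra hlt
  push_neg at hlt
  set d := p.natDegree with hd
  set S := ∑ k ∈ Finset.range d, ‖p.coeff k‖ with hS
  have hS0 : 0 ≤ S := Finset.sum_nonneg fun _ _ => norm_nonneg _
  have h1c : 1 ≤ ‖c‖ := le_trans (by linarith) hlt.le
  have hd0 : d ≠ 0 := by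
    intro h0
    have hp1 : p = 1 := hm.natDegree_eq_zero.mp h0
    rw [hp1] at hc
    simp at hc
  -- expand eval
  have heval : (0:ℂ) = ∑ k ∈ Finset.range (d + 1), p.coeff k * c ^ k := by
    rw [← hc, Polynomial.eval_eq_sum_range]
  rw [Finset.sum_range_succ] at heval
  have hcoeffd : p.coeff d = 1 := hm
  rw [hcoeffd, one_mul] at heval
  have hcd : c ^ d = -∑ k ∈ Finset.range d, p.coeff k * c ^ k := by
    rw [eq_neg_iff_add_eq_zero]
    linear_combination -heval
  have hnorm : ‖c‖ ^ d ≤ S * ‖c‖ ^ (d - 1) := by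
    calc ‖c‖ ^ d = ‖c ^ d‖ := (norm_pow c d).symm
    _ = ‖∑ k ∈ Finset.range d, p.coeff k * c ^ k‖ := by rw [hcd, norm_neg]
    _ ≤ ∑ k ∈ Finset.range d, ‖p.coeff k * c ^ k‖ := norm_sum_le _ _
    _ ≤ ∑ k ∈ Finset.range d, ‖p.coeff k‖ * ‖c‖ ^ (d - 1) := by
        refine Finset.sum_le_sum fun k hk => ?_
        rw [norm_mul, norm_pow]
        refine mul_le_mul_of_nonneg_left ?_ (norm_nonneg _)
        exact pow_le_pow_right₀ h1c (Nat.le_sub_one_of_lt (Finset.mem_range.mp hk))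
    _ = S * ‖c‖ ^ (d - 1) := by rw [hS, Finset.sum_mul]
  have hgt : S * ‖c‖ ^ (d - 1) < ‖c‖ ^ d := by
    have hpow : (0:ℝ) < ‖c‖ ^ (d - 1) := pow_pos (lt_of_lt_of_le one_pos h1c) _
    calc S * ‖c‖ ^ (d - 1) < ‖c‖ * ‖c‖ ^ (d - 1) := by
          refine mul_lt_mul_of_pos_right ?_ hpow
          linarith
    _ = ‖c‖ ^ d := by
        rw [← pow_succ']
        congr 1
        omega
  linarith

variable {V : Type*} [AddCommGroup V] [Module ℂ V]

lemma stmt17_repr (P : Submodule ℂ V) {ι : Type*} [Fintype ι] (β : Module.Basis ι ℂ P)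
    (Q : Submodule ℂ V) (h : IsCompl P Q) {x : V} (hx : x ∈ P) :
    ∑ i, (β.coord i ((P.projectionOnto Q h) x)) • (β i : V) = x := by
  have h1 : (P.projectionOnto Q h) x = ⟨x, hx⟩ := by
    have := Submodule.projectionOnto_apply_left h ⟨x, hx⟩
    simpa using this
  rw [h1]
  have h2 := congrArg (P.subtype) (β.sum_repr ⟨x, hx⟩)
  rw [map_sum] at h2
  simpa [Module.Basis.coord_apply] using h2

lemma stmt17_sum_smul_mulVec {d : ℕ} {ι : Type*} (s : Finset ι) (c : ι → ℂ)
    (M : ι → Matrix (Fin d) (Fin d) ℂ) (v : Fin d → ℂ) :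
    (∑ k ∈ s, c k • M k) *ᵥ v = ∑ k ∈ s, c k • (M k *ᵥ v) := by
  classical
  induction s using Finset.induction_on with
  | empty => simp
  | @insert a s ha ih =>
      simp [Finset.sum_insert ha, Matrix.add_mulVec, ih, Matrix.smul_mulVec]

end Helpers

/-- Let `(μ, V)` be an analytic family of admissible `(𝔤,K)`-modules over
a connected analytic manifold (a connected open `U ⊆ E`), finitely generated at some
`z₀ ∈ U`, with the same encoding as in Statement 16.  Let `T₁, …, T_m` generate the
center of `A` (standing for `Z(𝔤)`; infinitesimal characters are parametrized by their
values on the generators, the Harish-Chandra parameter).  Then for every compact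
`ω ⊆ U` there is a compact set `C ⊆ ℂᵐ` containing the parameter of every
infinitesimal character occurring in `(μ_z, V)` for `z ∈ ω`. -/
theorem stmt17
    {E : Type*} [NormedAddCommGroup E] [NormedSpace ℝ E]
    {V : Type*} [AddCommGroup V] [Module ℂ V]
    {A : Type*} [Ring A] [Algebra ℂ A]
    (U : Set E) (hUo : IsOpen U) (hUconn : IsPreconnected U)
    (Γ : Type*) (Viso : Γ → Submodule ℂ V)
    (hfin : ∀ γ, FiniteDimensional ℂ (Viso γ))
    (hindep : iSupIndep Viso)
    (hspan : ⨆ γ, Viso γ = ⊤)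
    (μ : E → A →ₐ[ℂ] Module.End ℂ V)
    (hanal : ∀ (y : A) (v : V), ∀ z₀ ∈ U, ∃ U' : Set E, IsOpen U' ∧ z₀ ∈ U' ∧
      ∃ (r : ℕ) (w : Fin r → V) (c : Fin r → E → ℂ),
        (∀ i, AnalyticOnNhd ℝ (c i) U') ∧ ∀ z ∈ U' ∩ U, μ z y v = ∑ i, c i z • w i)
    (hcentral : ∀ z ∈ U, ∀ y ∈ Set.center A, ∀ γ, ∀ v ∈ Viso γ, μ z y v ∈ Viso γ)
    (z₀ : E) (hz₀ : z₀ ∈ U)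
    (hfg : ∃ F : Finset Γ,
      Submodule.span ℂ {x : V | ∃ y : A, ∃ v ∈ ⨆ γ ∈ F, Viso γ, x = μ z₀ y v} = ⊤)
    {m : ℕ} (T : Fin m → A) (hT : ∀ j, T j ∈ Set.center A)
    (hTgen : Algebra.adjoin ℂ (Set.range T) = Subalgebra.center ℂ A)
    (ω : Set E) (hω : IsCompact ω) (hωU : ω ⊆ U) :
    ∃ C : Set (Fin m → ℂ), IsCompact C ∧
      ∀ z ∈ ω, ∀ (c : Fin m → ℂ) (v : V), v ≠ 0 →
        (∀ j, μ z (T j) v = c j • v) → c ∈ C := by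
  classical
  obtain ⟨F, hfgF⟩ := hfg
  set W : Submodule ℂ V := ⨆ γ ∈ F, Viso γ with hWdef
  haveI hWfin : FiniteDimensional ℂ W := by
    have h1 : W = F.sup Viso := by rw [hWdef, Finset.sup_eq_iSup]
    rw [h1]
    haveI := hfin
    infer_instance
  set d : ℕ := Module.finrank ℂ W with hd
  set βW : Module.Basis (Fin d) ℂ W := Module.finBasis ℂ W with hβW
  obtain ⟨Qw, hQw⟩ := Submodule.exists_isCompl W
  set ℓW : Fin d → (V →ₗ[ℂ] ℂ) :=
    fun i => (βW.coord i).comp (W.projectionOnto Qw hQw) with hℓW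
  have hreprW : ∀ x ∈ W, ∑ i, ℓW i x • (βW i : V) = x := by
    intro x hx
    have := stmt17_repr W βW Qw hQw hx
    simpa [hℓW] using this
  -- centrality of powers
  have hTkc : ∀ (j : Fin m) (k : ℕ), T j ^ k ∈ Set.center A := fun j k =>
    Semigroup.mem_center_iff.mpr fun g =>
      Commute.pow_right (Semigroup.mem_center_iff.mp (hT j) g) k
  -- invariance of W
  have hWinv : ∀ z ∈ U, ∀ y ∈ Set.center A, ∀ x ∈ W, μ z y x ∈ W := by
    intro z hz y hy x hx
    have hmap : W.map (μ z y) ≤ W := by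
      rw [hWdef, Submodule.map_iSup]
      refine iSup_le fun γ => ?_
      rw [Submodule.map_iSup]
      refine iSup_le fun hγF => ?_
      refine le_trans (Submodule.map_le_iff_le_comap.mpr fun u hu =>
        Submodule.mem_comap.mpr (hcentral z hz y hy γ u hu)) ?_
      exact le_iSup₂ (f := fun γ (_ : γ ∈ F) => Viso γ) γ hγF
    exact hmap (Submodule.mem_map_of_mem hx)
  -- matrices and coefficient functions
  set Nmat : Fin m → E → Matrix (Fin d) (Fin d) ℂ :=
    fun j z => Matrix.of (fun i k => ℓW i (μ z (T j) (βW k : V))) with hNmat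
  set a : Fin m → ℕ → E → ℂ := fun j k z => ((Nmat j z).charpoly).coeff k with ha
  set Pop : Fin m → E → Module.End ℂ V :=
    fun j z => ∑ k ∈ Finset.range (d+1), a j k z • μ z (T j ^ k) with hPop
  have hPopapp : ∀ j z (v : V),
      Pop j z v = ∑ k ∈ Finset.range (d+1), a j k z • (μ z (T j ^ k) v) := by
    intro j z v
    rw [hPop]
    simp [LinearMap.sum_apply, LinearMap.smul_apply]
  -- basic analyticity
  have hL1 : ∀ (y : A) (v : V) (ℓ : V →ₗ[ℂ] ℂ),
      AnalyticOnNhd ℝ (fun z => ℓ (μ z y v)) U := by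
    intro y v ℓ x hx
    obtain ⟨U', hU'o, hxU', r, w, cf, hcf, heq⟩ := hanal y v x hx
    have hg : AnalyticAt ℝ (fun z => ∑ i, cf i z * ℓ (w i)) x :=
      stmt17_sum (U := U') Finset.univ (fun i z => cf i z * ℓ (w i))
        (fun i _ => (hcf i).mul analyticOnNhd_const) x hxU'
    refine hg.congr ?_
    have hmem : U' ∩ U ∈ nhds x := (hU'o.inter hUo).mem_nhds ⟨hxU', hx⟩
    filter_upwards [hmem] with z hzmem
    rw [heq z hzmem, map_sum]
    simp [smul_eq_mul]
  have hNanal : ∀ j i k, AnalyticOnNhd ℝ (fun z => Nmat j z i k) U := by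
    intro j i k
    have : (fun z => Nmat j z i k) = fun z => ℓW i (μ z (T j) (βW k : V)) := by
      funext z; rfl
    rw [this]
    exact hL1 _ _ _
  have haj : ∀ j k, AnalyticOnNhd ℝ (a j k) U := by
    intro j k
    have : a j k = fun z => ((Nmat j z).charpoly).coeff k := by rw [ha]
    rw [this]
    exact stmt17_charpoly_coeff _ (hNanal j)
  -- coordinates of the action on W
  have hstep : ∀ z ∈ U, ∀ j, ∀ x ∈ W, ∀ i,
      ℓW i (μ z (T j) x) = ((Nmat j z) *ᵥ (fun i' => ℓW i' x)) i := by
    intro z hz j x hx i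
    conv_lhs => rw [← hreprW x hx]
    rw [map_sum, map_sum]
    simp only [_root_.map_smul, smul_eq_mul]
    rw [Matrix.mulVec, dotProduct]
    exact Finset.sum_congr rfl fun k _ => by rw [mul_comm]; rfl
  have hpowstep : ∀ z ∈ U, ∀ (j : Fin m) (k : ℕ), ∀ x ∈ W, ∀ i,
      ℓW i (μ z (T j ^ k) x) = (((Nmat j z) ^ k) *ᵥ fun i' => ℓW i' x) i := by
    intro z hz j k
    induction k with
    | zero =>
        intro x hx i
        simp [Matrix.one_mulVec]
    | succ k ih =>
        intro x hx i
        have hx' : μ z (T j) x ∈ W := hWinv z hz (T j) (hT j) x hx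
        rw [pow_succ, _root_.map_mul, Module.End.mul_apply, ih (μ z (T j) x) hx' i]
        have hc : (fun i' => ℓW i' (μ z (T j) x)) = (Nmat j z) *ᵥ (fun i' => ℓW i' x) :=
          funext fun i' => hstep z hz j x hx i'
        rw [hc, Matrix.mulVec_mulVec, ← pow_succ]
  -- Cayley-Hamilton: Pop kills W
  have hPopW : ∀ z ∈ U, ∀ j, ∀ x ∈ W, Pop j z x = 0 := by
    intro z hz j x hx
    have hmem : Pop j z x ∈ W := by
      rw [hPopapp]
      exact Submodule.sum_mem _ fun k _ =>
        Submodule.smul_mem _ _ (hWinv z hz _ (hTkc j k) x hx)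
    have hco : ∀ i, ℓW i (Pop j z x) = 0 := by
      intro i
      rw [hPopapp, map_sum]
      simp only [_root_.map_smul, smul_eq_mul]
      rw [Finset.sum_congr rfl fun k (_ : k ∈ Finset.range (d+1)) => by
        rw [hpowstep z hz j k x hx i]]
      have hch : (∑ k ∈ Finset.range (d+1), a j k z • (Nmat j z)^k) = 0 := by
        have hnd : (Nmat j z).charpoly.natDegree = d := by
          rw [Matrix.charpoly_natDegree_eq_dim, Fintype.card_fin]
        have h2 := Matrix.aeval_self_charpoly (Nmat j z)
        rw [Polynomial.aeval_eq_sum_range, hnd] at h2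
        exact h2
      have hv := congrArg (fun M => (M *ᵥ fun i' => ℓW i' x) i) hch
      simp only [stmt17_sum_smul_mulVec, Matrix.zero_mulVec] at hv
      simpa using hv
    have hz2 := hreprW _ hmem
    rw [Finset.sum_congr rfl fun i (_ : i ∈ Finset.univ) => by
      rw [hco i, zero_smul]] at hz2
    rw [← hz2]
    simp
  -- Pop kills the module generated by W
  have hPopGen : ∀ z ∈ U, ∀ j, ∀ (y : A), ∀ x ∈ W, Pop j z (μ z y x) = 0 := by
    intro z hz j y x hx
    have hswap : ∀ k : ℕ, μ z (T j ^ k) (μ z y x) = μ z y (μ z (T j ^ k) x) := by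
      intro k
      have h1 : T j ^ k * y = y * T j ^ k :=
        (Semigroup.mem_center_iff.mp (hTkc j k) y).symm
      calc μ z (T j ^ k) (μ z y x) = (μ z (T j ^ k) * μ z y) x := rfl
        _ = μ z (T j ^ k * y) x := by rw [_root_.map_mul]
        _ = μ z (y * T j ^ k) x := by rw [h1]
        _ = (μ z y * μ z (T j ^ k)) x := by rw [_root_.map_mul]
        _ = μ z y (μ z (T j ^ k) x) := rfl
    rw [hPopapp]
    rw [Finset.sum_congr rfl fun k (_ : k ∈ Finset.range (d+1)) => by rw [hswap k]]
    have h3 : ∑ k ∈ Finset.range (d+1), a j k z • μ z y (μ z (T j ^ k) x)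
        = μ z y (∑ k ∈ Finset.range (d+1), a j k z • μ z (T j ^ k) x) := by
      rw [map_sum]
      exact Finset.sum_congr rfl fun k _ => (_root_.map_smul _ _ _).symm
    rw [h3, ← hPopapp, hPopW z hz j x hx, map_zero]
  -- every vector is generated at z₀
  have hgen : ∀ b : V, ∃ (n : ℕ) (y : Fin n → A) (w : Fin n → V),
      (∀ t, w t ∈ W) ∧ ∑ t, μ z₀ (y t) (w t) = b := by
    intro b
    have hb : b ∈ Submodule.span ℂ {x : V | ∃ y : A, ∃ v ∈ W, x = μ z₀ y v} := by
      rw [hfgF]; trivial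
    obtain ⟨n, f, g, hsum⟩ := Submodule.mem_span_set'.mp hb
    have hg2 : ∀ t : Fin n, ∃ (y : A) (v : V), v ∈ W ∧ (g t : V) = μ z₀ y v := by
      intro t
      obtain ⟨y, v, hv, hvv⟩ := (g t).2
      exact ⟨y, v, hv, hvv⟩
    choose yy ww hww hgeq using hg2
    refine ⟨n, fun t => f t • yy t, ww, hww, ?_⟩
    calc ∑ t, μ z₀ (f t • yy t) (ww t) = ∑ t, f t • μ z₀ (yy t) (ww t) := by
          refine Finset.sum_congr rfl fun t _ => ?_
          rw [_root_.map_smul]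
          rfl
      _ = ∑ t, f t • (g t : V) := by
          refine Finset.sum_congr rfl fun t _ => by rw [← hgeq t]
      _ = b := hsum
  -- main annihilation statement
  have hann : ∀ z ∈ U, ∀ j (v : V), Pop j z v = 0 := by
    have hγ : ∀ (γ : Γ) (j : Fin m), ∀ z ∈ U, ∀ b ∈ Viso γ, Pop j z b = 0 := by
      intro γ j
      haveI := hfin γ
      set r : ℕ := Module.finrank ℂ (Viso γ) with hr
      set βγ : Module.Basis (Fin r) ℂ (Viso γ) := Module.finBasis ℂ (Viso γ) with hβγ
      set Kγ : Submodule ℂ V := ⨆ (γ') (_ : γ' ≠ γ), Viso γ' with hKγ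
      have hdis : Disjoint (Viso γ) Kγ := hindep γ
      have hcod : Viso γ ⊔ Kγ = ⊤ := by
        rw [← hspan]
        refine le_antisymm (sup_le (le_iSup _ γ)
          (iSup_le fun γ' => iSup_le fun _ => le_iSup _ γ')) (iSup_le fun γ' => ?_)
        by_cases h : γ' = γ
        · subst h; exact le_sup_left
        · exact le_trans (le_iSup₂ (f := fun γ' (_ : γ' ≠ γ) => Viso γ') γ' h) le_sup_right
      have hcompl : IsCompl (Viso γ) Kγ := ⟨hdis, codisjoint_iff.mpr hcod⟩
      set πγ : V →ₗ[ℂ] (Viso γ) := (Viso γ).projectionOnto Kγ hcompl with hπγ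
      set πγ' : V →ₗ[ℂ] V := (Viso γ).subtype.comp πγ with hπγ'
      set ℓγ : Fin r → (V →ₗ[ℂ] ℂ) := fun s => (βγ.coord s).comp πγ with hℓγ
      have hreprγ : ∀ x ∈ Viso γ, ∑ s, ℓγ s x • (βγ s : V) = x := by
        intro x hx
        have := stmt17_repr (Viso γ) βγ Kγ hcompl hx
        simpa [hℓγ] using this
      have hKinv : ∀ z ∈ U, ∀ y ∈ Set.center A, ∀ x ∈ Kγ, μ z y x ∈ Kγ := by
        intro z hz y hy x hx
        have hmap : Kγ.map (μ z y) ≤ Kγ := by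
          rw [hKγ, Submodule.map_iSup]
          refine iSup_le fun γ' => ?_
          rw [Submodule.map_iSup]
          refine iSup_le fun hne => ?_
          refine le_trans (Submodule.map_le_iff_le_comap.mpr fun u hu =>
            Submodule.mem_comap.mpr (hcentral z hz y hy γ' u hu)) ?_
          exact le_iSup₂ (f := fun γ' (_ : γ' ≠ γ) => Viso γ') γ' hne
        exact hmap (Submodule.mem_map_of_mem hx)
      have hprojadd : ∀ u ∈ Viso γ, ∀ w ∈ Kγ, πγ' (u + w) = u := by
        intro u hu w hw
        have h1 : πγ u = ⟨u, hu⟩ := by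
          have := Submodule.projectionOnto_apply_left hcompl ⟨u, hu⟩
          simpa [hπγ] using this
        have h2 : πγ w = 0 := by
          have := Submodule.projectionOnto_apply_of_mem_right hcompl hw
          simpa [hπγ] using this
        rw [hπγ']
        simp [map_add, h1, h2]
      have hπcomm : ∀ z ∈ U, ∀ y ∈ Set.center A, ∀ v : V,
          πγ' (μ z y v) = μ z y (πγ' v) := by
        intro z hz y hy v
        have hvmem : v ∈ Viso γ ⊔ Kγ := by rw [hcod]; trivial
        obtain ⟨u, hu, w, hw, rfl⟩ := Submodule.mem_sup.mp hvmem
        rw [hprojadd u hu w hw, map_add]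
        rw [hprojadd (μ z y u) (hcentral z hz y hy γ u hu) (μ z y w) (hKinv z hz y hy w hw)]
      have hPopπ : ∀ z ∈ U, ∀ v : V, πγ' (Pop j z v) = Pop j z (πγ' v) := by
        intro z hz v
        rw [hPopapp, hPopapp, map_sum]
        refine Finset.sum_congr rfl fun k _ => ?_
        rw [_root_.map_smul, hπcomm z hz _ (hTkc j k) v]
      have hgen' := fun s : Fin r => hgen (βγ s : V)
      choose n yy ww hww hBrep using hgen'
      set B : Fin r → E → V := fun s z => ∑ t, μ z (yy s t) (ww s t) with hB
      have hBz₀ : ∀ s, B s z₀ = (βγ s : V) := fun s => hBrep s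
      have hPopB : ∀ z ∈ U, ∀ s, Pop j z (B s z) = 0 := by
        intro z hz s
        rw [hB]
        simp only
        rw [map_sum]
        exact Finset.sum_eq_zero fun t _ => hPopGen z hz j (yy s t) (ww s t) (hww s t)
      have hPopu : ∀ z ∈ U, ∀ s, Pop j z (πγ' (B s z)) = 0 := fun z hz s => by
        rw [← hPopπ z hz, hPopB z hz s, map_zero]
      set D : E → Matrix (Fin r) (Fin r) ℂ := fun z => Matrix.of fun s t => ℓγ t (B s z)
        with hD
      have hDanal : ∀ s t, AnalyticOnNhd ℝ (fun z => D z s t) U := by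
        intro s t
        have he : (fun z => D z s t) = fun z => ∑ u, ℓγ t (μ z (yy s u) (ww s u)) := by
          funext z
          show ℓγ t (B s z) = _
          rw [hB]
          simp only
          rw [map_sum]
        rw [he]
        exact stmt17_sum _ _ fun u _ => hL1 _ _ _
      have hD1 : D z₀ = 1 := by
        ext s t
        show ℓγ t (B s z₀) = _
        rw [hBz₀ s, hℓγ]
        simp only [LinearMap.comp_apply]
        have h1 : πγ (βγ s : V) = βγ s := by
          have := Submodule.projectionOnto_apply_left hcompl (βγ s)
          simpa [hπγ] using this
        rw [h1, Module.Basis.coord_apply]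
        simp only [βγ.repr_self_apply, Matrix.one_apply]
      have hev : ∀ᶠ z' in nhds z₀, (D z').det ≠ 0 ∧ z' ∈ U := by
        have h1 : ContinuousAt (fun z => (D z).det) z₀ :=
          ((stmt17_det _ hDanal) z₀ hz₀).continuousAt
        have h2 : (D z₀).det ≠ 0 := by rw [hD1]; simp
        exact (h1.eventually_ne h2).and (hUo.eventually_mem hz₀)
      have hFzero : ∀ z', (D z').det ≠ 0 → z' ∈ U → ∀ s t,
          ℓγ t (Pop j z' (βγ s : V)) = 0 := by
        intro z' hdet hz' s t
        have hucoord : ∀ i u, ℓγ u (πγ' (B i z')) = D z' i u := by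
          intro i u
          rw [hℓγ, hπγ']
          simp only [LinearMap.comp_apply, Submodule.coe_subtype]
          have h1 : πγ ((πγ (B i z') : V)) = πγ (B i z') :=
            Submodule.projectionOnto_apply_left hcompl _
          rw [h1]
          rfl
        have humem : ∀ i, πγ' (B i z') ∈ Viso γ := fun i => by
          rw [hπγ']
          exact (πγ (B i z')).2
        have hurep : ∀ i, πγ' (B i z') = ∑ u, D z' i u • (βγ u : V) := by
          intro i
          conv_lhs => rw [← hreprγ _ (humem i)]
          exact Finset.sum_congr rfl fun u _ => by rw [hucoord i u]
        have hvec : ∀ i, ∑ u, D z' i u * ℓγ t (Pop j z' (βγ u : V)) = 0 := by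
          intro i
          have h0 := hPopu z' hz' i
          rw [hurep i, map_sum] at h0
          have h4 := congrArg (ℓγ t) h0
          rw [map_sum, map_zero] at h4
          simpa [_root_.map_smul, smul_eq_mul] using h4
        have hDg : D z' *ᵥ (fun u => ℓγ t (Pop j z' (βγ u : V))) = 0 :=
          funext fun i => by simpa [Matrix.mulVec, dotProduct] using hvec i
        have hgz : (fun u => ℓγ t (Pop j z' (βγ u : V))) = 0 := by
          have hInv := Matrix.nonsing_inv_mul (D z') (isUnit_iff_ne_zero.mpr hdet)
          calc (fun u => ℓγ t (Pop j z' (βγ u : V)))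
              = (1 : Matrix (Fin r) (Fin r) ℂ) *ᵥ _ := (Matrix.one_mulVec _).symm
            _ = ((D z')⁻¹ * D z') *ᵥ _ := by rw [hInv]
            _ = (D z')⁻¹ *ᵥ (D z' *ᵥ _) := (Matrix.mulVec_mulVec _ _ _).symm
            _ = 0 := by rw [hDg, Matrix.mulVec_zero]
        exact congrFun hgz s
      have hFanal : ∀ s t, AnalyticOnNhd ℝ (fun z => ℓγ t (Pop j z (βγ s : V))) U := by
        intro s t
        have he : (fun z => ℓγ t (Pop j z (βγ s : V)))
            = fun z => ∑ k ∈ Finset.range (d+1), a j k z * ℓγ t (μ z (T j ^ k) (βγ s : V)) := by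
          funext z
          rw [hPopapp, map_sum]
          exact Finset.sum_congr rfl fun k _ => by rw [_root_.map_smul, smul_eq_mul]
        rw [he]
        exact stmt17_sum _ _ fun k _ => (haj j k).mul (hL1 _ _ _)
      have hFall : ∀ s t, ∀ z ∈ U, ℓγ t (Pop j z (βγ s : V)) = 0 := by
        intro s t z hz
        have h0 : (fun z => ℓγ t (Pop j z (βγ s : V))) =ᶠ[nhds z₀] 0 := by
          filter_upwards [hev] with z' hz'
          exact hFzero z' hz'.1 hz'.2 s t
        exact (hFanal s t).eqOn_zero_of_preconnected_of_eventuallyEq_zero hUconn hz₀ h0 hz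
      have hbasis0 : ∀ z ∈ U, ∀ s, Pop j z (βγ s : V) = 0 := by
        intro z hz s
        have hmem : Pop j z (βγ s : V) ∈ Viso γ := by
          rw [hPopapp]
          exact Submodule.sum_mem _ fun k _ =>
            Submodule.smul_mem _ _ (hcentral z hz _ (hTkc j k) γ _ (βγ s).2)
        have hz2 := hreprγ _ hmem
        rw [Finset.sum_congr rfl fun u (_ : u ∈ Finset.univ) => by
          rw [hFall s u z hz, zero_smul]] at hz2
        rw [← hz2]
        simp
      intro z hz b hb
      have hz2 := hreprγ b hb
      calc Pop j z b = Pop j z (∑ s, ℓγ s b • (βγ s : V)) := by rw [hz2]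
        _ = ∑ s, ℓγ s b • Pop j z (βγ s : V) := by
            rw [map_sum]
            exact Finset.sum_congr rfl fun s _ => by rw [_root_.map_smul]
        _ = 0 := Finset.sum_eq_zero fun s _ => by rw [hbasis0 z hz s, smul_zero]
    intro z hz j v
    have hle : (⊤ : Submodule ℂ V) ≤ LinearMap.ker (Pop j z) := by
      rw [← hspan]
      exact iSup_le fun γ b hb => LinearMap.mem_ker.mpr (hγ γ j z hz b hb)
    exact LinearMap.mem_ker.mp (hle Submodule.mem_top)
  -- bounds on ω
  have hbound : ∀ j : Fin m, ∃ M : ℝ, 0 ≤ M ∧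
      ∀ z ∈ ω, ∑ k ∈ Finset.range d, ‖a j k z‖ ≤ M := by
    intro j
    have hcont : ContinuousOn (fun z => ∑ k ∈ Finset.range d, ‖a j k z‖) ω := by
      refine continuousOn_finset_sum _ fun k _ => ?_
      exact (((haj j k).continuousOn).mono hωU).norm
    obtain ⟨M, hM⟩ := hω.exists_bound_of_continuousOn hcont
    refine ⟨max M 0, le_max_right _ _, fun z hz => ?_⟩
    have h1 := hM z hz
    rw [Real.norm_eq_abs] at h1
    exact le_trans (le_trans (le_abs_self _) h1) (le_max_left _ _)
  choose M hM0 hMb using hbound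
  set R : ℝ := 1 + ∑ j, M j with hR
  have hR0 : 0 ≤ R := by
    have : 0 ≤ ∑ j, M j := Finset.sum_nonneg fun j _ => hM0 j
    rw [hR]; linarith
  refine ⟨Metric.closedBall 0 R, isCompact_closedBall 0 R, ?_⟩
  intro z hzω c v hv0 heig
  have hzU : z ∈ U := hωU hzω
  rw [mem_closedBall_zero_iff]
  rw [pi_norm_le_iff_of_nonneg hR0]
  intro j
  have hpow : ∀ k : ℕ, μ z (T j ^ k) v = (c j ^ k) • v := by
    intro k
    induction k with
    | zero => simp
    | succ k ih =>
        rw [pow_succ, _root_.map_mul, Module.End.mul_apply, heig j, _root_.map_smul, ih,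
          smul_smul, pow_succ]
        rw [mul_comm]
  have h0 : (∑ k ∈ Finset.range (d+1), a j k z * c j ^ k) • v = 0 := by
    calc (∑ k ∈ Finset.range (d+1), a j k z * c j ^ k) • v
        = ∑ k ∈ Finset.range (d+1), a j k z • (c j ^ k • v) := by
          rw [Finset.sum_smul]
          exact Finset.sum_congr rfl fun k _ => (smul_smul _ _ _).symm
      _ = ∑ k ∈ Finset.range (d+1), a j k z • μ z (T j ^ k) v := by
          exact Finset.sum_congr rfl fun k _ => by rw [hpow k]
      _ = Pop j z v := (hPopapp j z v).symm
      _ = 0 := hann z hzU j v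
  have hev0 : ∑ k ∈ Finset.range (d+1), a j k z * c j ^ k = 0 := by
    rcases smul_eq_zero.mp h0 with h | h
    · exact h
    · exact absurd h hv0
  have hnd : (Nmat j z).charpoly.natDegree = d := by
    rw [Matrix.charpoly_natDegree_eq_dim, Fintype.card_fin]
  have heval : (Nmat j z).charpoly.eval (c j) = 0 := by
    rw [Polynomial.eval_eq_sum_range, hnd]
    exact hev0
  have hroot := stmt17_root_bound _ (Matrix.charpoly_monic _) heval
  rw [hnd] at hroot
  have h5 : M j ≤ ∑ j', M j' := Finset.single_le_sum (fun j' _ => hM0 j') (Finset.mem_univ j)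
  have h6 := hMb j z hzω
  rw [hR]
  calc ‖c j‖ ≤ 1 + ∑ k ∈ Finset.range d, ‖a j k z‖ := hroot
    _ ≤ 1 + M j := by linarith
    _ ≤ 1 + ∑ j', M j' := by linarith
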